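/- arXiv:1607.00264 — 4 statements merged into one kernel-verified Lean document; each statement's English description precedes it below -/
import Mathlib

section
/- For a nonzero polynomial f ∈ K[x₁,…,xₙ] and any v ∈ ℕⁿ, the set {γ ∈ Kⁿ : v_γ(f) ≥_lex v} is an algebraic subset of Kⁿ (i.e., it is the common zero set of a family of polynomials in γ). In particular, the Lazard valuation is upper semicontinuous in the Zariski topology. -/
open MvPolynomial

/-- The Lazard valuation of a polynomial `f` at a point `α`: the lexicographically
least exponent vector occurring in the expansion of `f` about `α`. -/
noncomputable def lazardVal {K : Type*} [CommRing K] {n : ℕ}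
    (α : Fin n → K) (f : MvPolynomial (Fin n) K) : Lex (Fin n →₀ ℕ) :=
  (((MvPolynomial.bind₁ (fun i => X i + C (α i)) f).support.image toLex).min).untopD (toLex 0)

lemma shift_ne_zero {K : Type*} [CommRing K] {n : ℕ} (γ : Fin n → K)
    (f : MvPolynomial (Fin n) K) (hf : f ≠ 0) :
    MvPolynomial.bind₁ (fun i => X i + C (γ i)) f ≠ 0 := by
  intro h
  apply hf
  have := congrArg (MvPolynomial.bind₁ (fun i => X i - C (γ i))) h
  rw [MvPolynomial.bind₁_bind₁, map_zero] at this
  simpa using this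

lemma eval_coeff_shift {K : Type*} [CommRing K] {n : ℕ} (γ : Fin n → K)
    (f : MvPolynomial (Fin n) K) (w : Fin n →₀ ℕ) :
    MvPolynomial.eval γ
      (MvPolynomial.coeff w
        (MvPolynomial.bind₁ (fun i => X i + C (X i : MvPolynomial (Fin n) K))
          (MvPolynomial.map MvPolynomial.C f)))
    = MvPolynomial.coeff w (MvPolynomial.bind₁ (fun i => X i + C (γ i)) f) := by
  rw [← MvPolynomial.coeff_map]
  congr 1
  rw [MvPolynomial.map_bind₁]
  have h1 : ∀ i : Fin n,
      MvPolynomial.map (MvPolynomial.eval γ) (X i + C (X i : MvPolynomial (Fin n) K))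
        = X i + C (γ i) := by intro i; simp
  simp only [h1]
  rw [MvPolynomial.map_map]
  have h2 : (MvPolynomial.eval γ).comp (MvPolynomial.C (σ := Fin n)) = RingHom.id _ := by
    ext a; simp
  rw [h2, MvPolynomial.map_id]

/-- Upper semicontinuity of the Lazard valuation: for a nonzero polynomial `f` and
any `v ∈ ℕⁿ`, the set `{γ | v_γ(f) ≥_lex v}` is an algebraic subset of `Kⁿ`, i.e. the
common zero set of a family of polynomials. -/
theorem lazardVal_superlevel_set_is_algebraic {K : Type*} [Field K] {n : ℕ}
    (f : MvPolynomial (Fin n) K) (hf : f ≠ 0) (v : Fin n →₀ ℕ) :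
    ∃ P : Set (MvPolynomial (Fin n) K),
      {γ : Fin n → K | toLex v ≤ lazardVal γ f} =
      {γ : Fin n → K | ∀ p ∈ P, MvPolynomial.eval γ p = 0} := by
  classical
  set F : MvPolynomial (Fin n) (MvPolynomial (Fin n) K) :=
    MvPolynomial.bind₁ (fun i => X i + C (X i : MvPolynomial (Fin n) K))
      (MvPolynomial.map MvPolynomial.C f) with hF
  refine ⟨{p | ∃ w : Fin n →₀ ℕ, toLex w < toLex v ∧ p = MvPolynomial.coeff w F}, ?_⟩
  ext γ
  simp only [Set.mem_setOf_eq]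
  set g := MvPolynomial.bind₁ (fun i => X i + C (γ i)) f with hg
  have hg0 : g ≠ 0 := shift_ne_zero γ f hf
  set S := g.support.image toLex with hS
  have hSne : S.Nonempty := by
    refine Finset.image_nonempty.2 ?_
    exact MvPolynomial.support_nonempty.2 hg0
  obtain ⟨m, hm⟩ := Finset.min_of_nonempty hSne
  have hval : lazardVal γ f = m := by
    rw [lazardVal, ← hg, ← hS, hm]; rfl
  constructor
  · intro hle p ⟨w, hwv, hp⟩
    subst hp
    rw [eval_coeff_shift, ← hg]
    by_contra hne
    have hwS : toLex w ∈ S := Finset.mem_image_of_mem _ (MvPolynomial.mem_support_iff.2 hne)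
    have := Finset.min_le hwS
    rw [hm] at this
    have : m ≤ toLex w := by exact_mod_cast this
    rw [hval] at hle
    exact absurd (lt_of_le_of_lt this (lt_of_lt_of_le hwv hle)) (lt_irrefl _)
  · intro h
    rw [hval]
    have hmS : m ∈ S := Finset.mem_of_min hm
    obtain ⟨w, hwsupp, hwm⟩ := Finset.mem_image.1 hmS
    by_contra hlt
    push_neg at hlt
    have : toLex w < toLex v := hwm ▸ hlt
    have := h (MvPolynomial.coeff w F) ⟨w, this, rfl⟩
    rw [eval_coeff_shift, ← hg] at this
    exact MvPolynomial.mem_support_iff.1 hwsupp this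
end

section
/- Let f(x,y) ∈ K[x,y] (K = ℝ or ℂ) be primitive of positive degree in y and squarefree. Then for all but finitely many points (α,β) ∈ K² on the curve f(x,y) = 0, the Lazard valuation v_{(α,β)}(f) equals (0,1). -/
open MvPolynomial

/-- `f`, viewed as a polynomial in the variable `y = x₁` over `K[x]` (`x = x₀`). -/
noncomputable def asPolyInY {K : Type*} [CommRing K] (f : MvPolynomial (Fin 2) K) :
    Polynomial (MvPolynomial (Fin 1) K) :=
  MvPolynomial.finSuccEquiv K 1 (MvPolynomial.rename (Equiv.swap 0 1) f)


set_option maxHeartbeats 1000000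
set_option synthInstance.maxHeartbeats 1000000

section AuxLemmas

open scoped nonZeroDivisors

variable {K : Type*} [CommRing K]


variable {K : Type*} [CommRing K]

theorem constCoeff_pderiv {n : ℕ} (i : Fin n) (φ : MvPolynomial (Fin n) K) :
    constantCoeff (pderiv i φ) = coeff (Finsupp.single i 1) φ := by
  induction φ using MvPolynomial.induction_on' with
  | monomial m a =>
    rw [pderiv_monomial]
    simp only [constantCoeff_monomial, MvPolynomial.coeff_monomial]
    rcases eq_or_ne m (Finsupp.single i 1) with rfl | hm
    · simp
    · rw [if_neg hm]
      rcases eq_or_ne (m - Finsupp.single i 1) 0 with h0 | h0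
      · rcases eq_or_ne (m i) 0 with hmi | hmi
        · simp [hmi]
        · exfalso; apply hm
          ext j
          have := Finsupp.ext_iff.mp h0 j
          rw [Finsupp.tsub_apply, Finsupp.zero_apply] at this
          rcases eq_or_ne j i with rfl | hj
          · simp only [Finsupp.single_eq_same] at this ⊢
            omega
          · simpa [Finsupp.single_eq_of_ne hj] using this
      · rw [if_neg h0]
  | add p q hp hq => simp [hp, hq]

theorem pderiv_bind₁_translate {n : ℕ} (i : Fin n) (α : Fin n → K) (f : MvPolynomial (Fin n) K) :
    pderiv i (bind₁ (fun j => X j + MvPolynomial.C (α j)) f)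
      = bind₁ (fun j => X j + MvPolynomial.C (α j)) (pderiv i f) := by
  induction f using MvPolynomial.induction_on with
  | C a => simp
  | add p q hp hq => simp [hp, hq]
  | mul_X p j hp =>
    simp only [map_mul, bind₁_X_right, pderiv_mul, hp]
    simp only [map_add, pderiv_X, pderiv_C, add_zero]
    rcases eq_or_ne j i with rfl | hj
    · simp [Pi.single_eq_same, mul_add]
    · simp [Pi.single_eq_of_ne hj]

theorem constCoeff_bind₁_translate {n : ℕ} (p : Fin n → K) (f : MvPolynomial (Fin n) K) :
    constantCoeff (bind₁ (fun j => X j + MvPolynomial.C (p j)) f) = eval p f := by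
  induction f using MvPolynomial.induction_on with
  | C a => simp
  | add g q hg hq => simp [hg, hq]
  | mul_X g j hg => simp [hg]


theorem lex_lt_single11 {v : Fin 2 →₀ ℕ}
    (h : toLex v < toLex (Finsupp.single 1 1)) : v = 0 := by
  obtain ⟨j, hj, hlt⟩ := h
  simp only [ofLex_toLex] at hj hlt
  fin_cases j
  · simp [Finsupp.single_apply, Fin.ext_iff] at hlt
  · simp only [Finsupp.single_apply, Fin.ext_iff] at hlt hj
    norm_num at hlt hj
    ext i
    fin_cases i
    · simpa using hj
    · simpa using hlt

theorem lazardVal_eq_of (p : Fin 2 → K) (f : MvPolynomial (Fin 2) K)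
    (h0 : eval p f = 0) (h1 : eval p (pderiv 1 f) ≠ 0) :
    lazardVal p f = toLex (Finsupp.single 1 1) := by
  set T := bind₁ (fun j => X j + MvPolynomial.C (p j)) f with hT
  have hmem : Finsupp.single (1 : Fin 2) 1 ∈ T.support := by
    rw [MvPolynomial.mem_support_iff, ← constCoeff_pderiv, pderiv_bind₁_translate,
      constCoeff_bind₁_translate]
    exact h1
  have hzero : (0 : Fin 2 →₀ ℕ) ∉ T.support := by
    rw [MvPolynomial.mem_support_iff, not_not]
    have : coeff 0 T = constantCoeff T := rfl
    rw [this, constCoeff_bind₁_translate]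
    exact h0
  set s := T.support.image toLex with hs
  have hmem' : toLex (Finsupp.single (1 : Fin 2) 1) ∈ s := Finset.mem_image_of_mem _ hmem
  have hne : s.Nonempty := ⟨_, hmem'⟩
  have hmin : s.min' hne = toLex (Finsupp.single 1 1) := by
    refine le_antisymm (Finset.min'_le _ _ hmem') ?_
    by_contra hlt
    push_neg at hlt
    obtain ⟨v, hv, hveq⟩ := Finset.mem_image.mp (s.min'_mem hne)
    rw [← hveq] at hlt
    have := lex_lt_single11 hlt
    subst this
    exact hzero hv
  have : s.min = (s.min' hne : WithTop (Lex (Fin 2 →₀ ℕ))) := (Finset.coe_min' hne).symm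
  rw [lazardVal, ← hs, this, hmin]
  rfl

noncomputable def psiEquiv (K : Type*) [CommRing K] :
    MvPolynomial (Fin 1) K ≃ₐ[K] Polynomial K :=
  (renameEquiv K ((Equiv.equivPUnit (Fin 1)) : Fin 1 ≃ PUnit.{1})).trans (pUnitAlgEquiv K)

theorem psiEquiv_X (i : Fin 1) : psiEquiv K (X i) = Polynomial.X := by
  simp [psiEquiv]

theorem psiEquiv_C (a : K) : psiEquiv K (C a) = Polynomial.C a := by
  simp [psiEquiv]

theorem psiEquiv_eval (c : MvPolynomial (Fin 1) K) (α : K) :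
    Polynomial.eval α (psiEquiv K c) = eval (fun _ => α) c := by
  induction c using MvPolynomial.induction_on with
  | C a => simp [psiEquiv_C]
  | add p q hp hq => simp [hp, hq]
  | mul_X p i hp => simp [psiEquiv_X, hp]

theorem dvd_of_eval_zero (c : MvPolynomial (Fin 1) K) (α : K)
    (hc : eval (fun _ => α) c = 0) : (X 0 - C α) ∣ c := by
  have h1 : psiEquiv K (X 0 - C α) = Polynomial.X - Polynomial.C α := by
    rw [map_sub, psiEquiv_X, psiEquiv_C]
  have h2 : (Polynomial.X - Polynomial.C α) ∣ psiEquiv K c := by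
    rw [Polynomial.dvd_iff_isRoot, Polynomial.IsRoot, psiEquiv_eval]
    exact hc
  rw [← h1] at h2
  have := map_dvd (psiEquiv K).symm.toAlgHom h2
  simpa using this

theorem notUnit_XsubC [Nontrivial K] (α : K) : ¬ IsUnit (X 0 - C α : MvPolynomial (Fin 1) K) := by
  intro h
  have := h.map (eval (fun _ => α) : MvPolynomial (Fin 1) K →+* K)
  simp at this

theorem Squarefree.map_mulEquiv {M N : Type*} [Monoid M] [Monoid N] (e : M ≃* N) {m : M}
    (h : Squarefree m) : Squarefree (e m) := by
  intro d hd
  have h2 : e.symm d * e.symm d ∣ m := by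
    have := map_dvd e.symm.toMonoidHom hd
    simpa using this
  have := (h _ h2).map e.toMonoidHom
  simpa using this

theorem derivative_finSuccEquiv {n : ℕ} (g : MvPolynomial (Fin (n+1)) K) :
    Polynomial.derivative (finSuccEquiv K n g) = finSuccEquiv K n (pderiv 0 g) := by
  induction g using MvPolynomial.induction_on with
  | C a => simp [finSuccEquiv_apply]
  | add p q hp hq => simp [hp, hq]
  | mul_X p i hp =>
    rw [map_mul, Polynomial.derivative_mul, hp, pderiv_mul, map_add, map_mul]
    induction i using Fin.cases with
    | zero => simp [finSuccEquiv_X_zero]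
    | succ j => simp [finSuccEquiv_X_succ, Pi.single_eq_of_ne (Fin.succ_ne_zero j)]

theorem asPolyInY_pderiv (f : MvPolynomial (Fin 2) K) :
    asPolyInY (pderiv 1 f) = Polynomial.derivative (asPolyInY f) := by
  rw [asPolyInY, asPolyInY, derivative_finSuccEquiv]
  congr 1
  have h := pderiv_rename (Equiv.injective (Equiv.swap (0:Fin 2) 1)) 1 f
  rw [show (Equiv.swap (0:Fin 2) 1) 1 = 0 by decide] at h
  exact h.symm

theorem asPolyInY_eval (p : Fin 2 → K) (g : MvPolynomial (Fin 2) K) :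
    Polynomial.eval₂ (eval (fun _ : Fin 1 => p 0)) (p 1) (asPolyInY g) = eval p g := by
  rw [asPolyInY, ← Polynomial.eval_map, ← eval_eq_eval_mv_eval', eval_rename]
  have hfun : ((Fin.cons (p 1) fun _ => p 0) ∘ ⇑(Equiv.swap (0:Fin 2) 1)) = p := by
    funext i
    fin_cases i
    · show (Fin.cons (p 1) (fun _ => p 0) : Fin 2 → K) ((Equiv.swap (0:Fin 2) 1) 0) = p 0
      rw [show (Equiv.swap (0:Fin 2) 1) 0 = 1 by decide]
      rfl
    · show (Fin.cons (p 1) (fun _ => p 0) : Fin 2 → K) ((Equiv.swap (0:Fin 2) 1) 1) = p 1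
      rw [show (Equiv.swap (0:Fin 2) 1) 1 = 0 by decide]
      rfl
  rw [hfun]


theorem exists_bezout {K : Type*} [Field K] [CharZero K]
    (F : Polynomial (MvPolynomial (Fin 1) K))
    (hprim : F.IsPrimitive) (hF0 : F ≠ 0) (hsq : Squarefree F) :
    ∃ (a b : Polynomial (MvPolynomial (Fin 1) K)) (d : MvPolynomial (Fin 1) K),
      d ≠ 0 ∧ a * F + b * Polynomial.derivative F = Polynomial.C d := by
  classical
  set A := MvPolynomial (Fin 1) K
  letI : NormalizationMonoid A := UniqueFactorizationMonoid.normalizationMonoid.toNormalizationMonoid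
  letI : NormalizedGCDMonoid A := UniqueFactorizationMonoid.toNormalizedGCDMonoid A
  set L := FractionRing A
  haveI : CharZero A := charZero_of_injective_algebraMap (C_injective (Fin 1) K)
  haveI : CharZero L := (RingHom.charZero_iff (IsFractionRing.injective A L)).mp inferInstance
  set φ : A →+* L := algebraMap A L with hφ
  have hφinj : Function.Injective φ := IsFractionRing.injective A L
  have hmapinj : Function.Injective (Polynomial.map φ) :=
    Polynomial.map_injective φ hφinj
  set Fm := F.map φ with hFm
  have hFm0 : Fm ≠ 0 := fun h => hF0 (hmapinj (by simpa using h))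
  -- squarefree over fraction field
  have hsqm : Squarefree Fm := by
    intro d hd
    have hd0 : d ≠ 0 := by
      rintro rfl
      exact hFm0 (zero_dvd_iff.mp (by simpa using hd))
    obtain ⟨⟨s, hs⟩, hmap⟩ := IsLocalization.integerNormalization_map_to_map A⁰ d
    set d₀ := IsLocalization.integerNormalization A⁰ d with hd₀
    have hs0 : s ≠ 0 := nonZeroDivisors.ne_zero hs
    have hmap' : d₀.map φ = Polynomial.C (φ s) * d := by
      rw [hmap, Algebra.smul_def, IsScalarTower.algebraMap_apply A L (Polynomial L)]
      rfl
    set D := d₀.primPart with hD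
    have hDprim : D.IsPrimitive := d₀.isPrimitive_primPart
    have hd₀0 : d₀ ≠ 0 := by
      intro h
      apply hd0
      have : d₀.map φ = 0 := by rw [h, Polynomial.map_zero]
      rw [hmap'] at this
      rcases mul_eq_zero.mp this with h' | h'
      · exact absurd (by simpa using (Polynomial.C_eq_zero.mp h')) (fun hh => hs0 (hφinj (by simpa using hh)))
      · exact h'
    have hcont0 : φ d₀.content ≠ 0 := fun h => by
      have : d₀.content = 0 := hφinj (by simpa using h)
      exact hd₀0 (Polynomial.content_eq_zero_iff.mp this)
    have hCcont : IsUnit (Polynomial.C (φ d₀.content) : Polynomial L) :=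
      Polynomial.isUnit_C.mpr (isUnit_iff_ne_zero.mpr hcont0)
    have hCs : IsUnit (Polynomial.C (φ s) : Polynomial L) :=
      Polynomial.isUnit_C.mpr (isUnit_iff_ne_zero.mpr (fun h => hs0 (hφinj (by simpa using h))))
    -- Associated (D.map φ) d
    have hfact : Polynomial.C (φ d₀.content) * D.map φ = Polynomial.C (φ s) * d := by
      rw [← hmap']
      conv_rhs => rw [d₀.eq_C_content_mul_primPart]
      rw [Polynomial.map_mul, Polynomial.map_C]
    have hAssoc : Associated (D.map φ) d := by
      have h1 : Associated (D.map φ) (Polynomial.C (φ d₀.content) * D.map φ) :=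
        (associated_unit_mul_left _ _ hCcont).symm
      rw [hfact] at h1
      exact h1.trans (associated_unit_mul_left d _ hCs)
    have hdvdF : D * D ∣ F := by
      have hdd : D.map φ * D.map φ ∣ Fm := (Associated.mul_mul hAssoc hAssoc).dvd.trans hd
      rw [← Polynomial.map_mul] at hdd
      exact (hDprim.mul hDprim).dvd_of_fraction_map_dvd_fraction_map hdd
    have hDu : IsUnit D := hsq D hdvdF
    exact hAssoc.isUnit (by simpa using hDu.map (Polynomial.mapRingHom φ))
  have hsep : Fm.Separable := (PerfectField.separable_iff_squarefree).mpr hsqm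
  obtain ⟨u, v, huv⟩ := hsep
  obtain ⟨⟨s₁, hs₁⟩, hu⟩ := IsLocalization.integerNormalization_map_to_map A⁰ u
  obtain ⟨⟨s₂, hs₂⟩, hv⟩ := IsLocalization.integerNormalization_map_to_map A⁰ v
  set U := IsLocalization.integerNormalization A⁰ u with hU
  set V := IsLocalization.integerNormalization A⁰ v with hV
  have hs₁0 : s₁ ≠ 0 := nonZeroDivisors.ne_zero hs₁
  have hs₂0 : s₂ ≠ 0 := nonZeroDivisors.ne_zero hs₂
  have hu' : U.map φ = Polynomial.C (φ s₁) * u := by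
    rw [hU, hu, Algebra.smul_def, IsScalarTower.algebraMap_apply A L (Polynomial L)]
    rfl
  have hv' : V.map φ = Polynomial.C (φ s₂) * v := by
    rw [hV, hv, Algebra.smul_def, IsScalarTower.algebraMap_apply A L (Polynomial L)]
    rfl
  refine ⟨Polynomial.C s₂ * U, Polynomial.C s₁ * V, s₁ * s₂, mul_ne_zero hs₁0 hs₂0, ?_⟩
  apply hmapinj
  rw [Polynomial.map_add, Polynomial.map_mul, Polynomial.map_mul, Polynomial.map_mul,
    Polynomial.map_mul, Polynomial.map_C, Polynomial.map_C, Polynomial.map_C, hu', hv',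
    ← Polynomial.derivative_map, map_mul φ, Polynomial.C_mul]
  linear_combination (Polynomial.C (φ s₁) * Polynomial.C (φ s₂)) * huv

theorem map_eval_ne_zero {K : Type*} [Field K] (F : Polynomial (MvPolynomial (Fin 1) K))
    (hprim : F.IsPrimitive) (α : K) :
    F.map (eval (fun _ : Fin 1 => α)) ≠ 0 := by
  intro h
  have hcoeff : ∀ i, eval (fun _ : Fin 1 => α) (F.coeff i) = 0 := fun i => by
    rw [← Polynomial.coeff_map, h, Polynomial.coeff_zero]
  have hdvd : Polynomial.C (X 0 - C α : MvPolynomial (Fin 1) K) ∣ F :=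
    (Polynomial.C_dvd_iff_dvd_coeff _ _).mpr fun i => dvd_of_eval_zero _ _ (hcoeff i)
  exact notUnit_XsubC α (hprim _ hdvd)

theorem zeroSet_finite {K : Type*} [Field K] (d : MvPolynomial (Fin 1) K) (hd : d ≠ 0) :
    {α : K | eval (fun _ => α) d = 0}.Finite := by
  have hq : psiEquiv K d ≠ 0 := fun h => hd (by
    have := congrArg (psiEquiv K).symm h
    simpa using this)
  apply Set.Finite.subset (Polynomial.finite_setOf_isRoot hq)
  intro α hα
  simp only [Set.mem_setOf_eq] at hα ⊢
  rw [Polynomial.IsRoot, psiEquiv_eval]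
  exact hα

theorem curve_sing_finite {K : Type*} [Field K] [CharZero K] (f : MvPolynomial (Fin 2) K)
    (hprim : (asPolyInY f).IsPrimitive) (hdeg : 0 < (asPolyInY f).natDegree)
    (hsqf : Squarefree f) :
    {p : Fin 2 → K | eval p f = 0 ∧ eval p (pderiv 1 f) = 0}.Finite := by
  classical
  have hF0 : asPolyInY f ≠ 0 := fun h => by
    rw [h, Polynomial.natDegree_zero] at hdeg
    exact lt_irrefl _ hdeg
  set F := asPolyInY f with hF
  have hsqF : Squarefree F := by
    have : asPolyInY f = ((renameEquiv K (Equiv.swap (0:Fin 2) 1)).trans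
        (finSuccEquiv K 1)).toMulEquiv f := rfl
    rw [hF, this]
    exact hsqf.map_mulEquiv _
  obtain ⟨a, b, d, hd0, hbez⟩ := exists_bezout F hprim hF0 hsqF
  have hZd := zeroSet_finite d hd0
  have hTfin : ∀ α : K, {p : Fin 2 → K | p 0 = α ∧
      Polynomial.eval (p 1) (F.map (eval (fun _ : Fin 1 => α))) = 0}.Finite := by
    intro α
    have hFα := map_eval_ne_zero F hprim α
    apply Set.Finite.of_finite_image (f := fun p => p 1)
    · apply Set.Finite.subset (Polynomial.finite_setOf_isRoot hFα)
      rintro β ⟨p, ⟨hp0, hp1⟩, rfl⟩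
      exact hp1
    · rintro p ⟨hp0, -⟩ q ⟨hq0, -⟩ h
      funext i
      fin_cases i
      · show p 0 = q 0
        rw [hp0, hq0]
      · exact h
  apply Set.Finite.subset (Set.Finite.biUnion hZd (fun α _ => hTfin α))
  rintro p ⟨h0, h1⟩
  set ev : Polynomial (MvPolynomial (Fin 1) K) →+* K :=
    Polynomial.eval₂RingHom (eval (fun _ : Fin 1 => p 0)) (p 1) with hev
  have hevF : ev F = 0 := by
    rw [hev]
    show Polynomial.eval₂ (eval (fun _ : Fin 1 => p 0)) (p 1) F = 0
    rw [hF, asPolyInY_eval]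
    exact h0
  have hevF' : ev (Polynomial.derivative F) = 0 := by
    have h2 : asPolyInY (pderiv 1 f) = Polynomial.derivative F := asPolyInY_pderiv f
    rw [hev, ← h2]
    show Polynomial.eval₂ (eval (fun _ : Fin 1 => p 0)) (p 1) (asPolyInY (pderiv 1 f)) = 0
    rw [asPolyInY_eval]
    exact h1
  have hmem : eval (fun _ : Fin 1 => p 0) d = 0 := by
    have := congrArg ev hbez
    rw [map_add, map_mul, map_mul, hevF, hevF', mul_zero, mul_zero, add_zero] at this
    rw [hev] at this
    simpa using this.symm
  refine Set.mem_biUnion hmem ⟨rfl, ?_⟩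
  rw [Polynomial.eval_map]
  exact hevF

end AuxLemmas

/-- Let `f(x,y) ∈ K[x,y]` (with `K = ℝ` or `ℂ`) be primitive of positive degree in `y`
and squarefree. Then for all but finitely many points `(α,β)` on the curve `f = 0`,
the Lazard valuation `v_{(α,β)}(f)` equals `(0,1)`. -/
theorem lazardVal_eq_zero_one_on_curve {K : Type*} [RCLike K]
    (f : MvPolynomial (Fin 2) K)
    (hprim : (asPolyInY f).IsPrimitive)
    (hdeg : 0 < (asPolyInY f).natDegree)
    (hsqf : Squarefree f) :
    {p : Fin 2 → K | MvPolynomial.eval p f = 0 ∧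
      lazardVal p f ≠ toLex (Finsupp.single 1 1)}.Finite := by
  haveI : CharZero K := inferInstance
  apply Set.Finite.subset (curve_sing_finite f hprim hdeg hsqf)
  rintro p ⟨h0, hne⟩
  refine ⟨h0, ?_⟩
  by_contra h1
  exact hne (lazardVal_eq_of p f h0 h1)
end

section
/- There exists a polynomial in three variables that is valuation-invariant but not order-invariant on a connected set: for f(x,y,z) = z² − xy and S the x-axis in ℝ³, the Lazard valuation of f at every point of S equals (0,0,2), but ord_{(0,0,0)}(f) = 2 while ord_{(α,0,0)}(f) = 1 for all α ≠ 0. -/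
open MvPolynomial

set_option maxRecDepth 4000

namespace LazardAux

noncomputable abbrev e1 : Fin 3 →₀ ℕ := Finsupp.single 2 2
noncomputable abbrev e2 : Fin 3 →₀ ℕ := Finsupp.single 0 1 + Finsupp.single 1 1
noncomputable abbrev e3 : Fin 3 →₀ ℕ := Finsupp.single 1 1

lemma ne12 : e1 ≠ e2 := by
  intro h; have := DFunLike.congr_fun h 2; simp [Finsupp.single_apply] at this
lemma ne13 : e1 ≠ e3 := by
  intro h; have := DFunLike.congr_fun h 2; simp [Finsupp.single_apply] at this
lemma ne23 : e2 ≠ e3 := by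
  intro h; have := DFunLike.congr_fun h 0; simp [Finsupp.single_apply] at this

lemma expand_eq (p : Fin 3 → ℝ) (h1 : p 1 = 0) (h2 : p 2 = 0) :
    (bind₁ (fun i => X i + C (p i)) ((X 2) ^ 2 - X 0 * X 1 : MvPolynomial (Fin 3) ℝ)) =
      monomial e1 1 + monomial e2 (-1) + monomial e3 (-(p 0)) := by
  have q1 : (monomial e1 (1:ℝ) : MvPolynomial (Fin 3) ℝ) = X 2 ^ 2 :=
    X_pow_eq_monomial.symm
  have q2 : (monomial e2 (-1:ℝ) : MvPolynomial (Fin 3) ℝ) = -(X 0 * X 1) := by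
    rw [X, X, monomial_mul, one_mul, ← map_neg (monomial _)]
  have q3 : (monomial e3 (-(p 0)) : MvPolynomial (Fin 3) ℝ) = C (-(p 0)) * X 1 := by
    rw [C_mul_X_eq_monomial]
  rw [q1, q2, q3]
  simp only [map_sub, map_pow, map_mul, bind₁_X_right, h1, h2, map_zero, add_zero, map_neg]
  ring

lemma coeff_q (a : ℝ) (d : Fin 3 →₀ ℕ) :
    coeff d (monomial e1 1 + monomial e2 (-1) + monomial e3 (-a) : MvPolynomial (Fin 3) ℝ) =
      (if e1 = d then (1:ℝ) else 0) + (if e2 = d then -1 else 0) + (if e3 = d then -a else 0) := by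
  simp only [coeff_add, coeff_monomial]

lemma mem1 (a : ℝ) :
    e1 ∈ (monomial e1 1 + monomial e2 (-1) + monomial e3 (-a) : MvPolynomial (Fin 3) ℝ).support := by
  rw [mem_support_iff, coeff_q, if_pos rfl, if_neg (fun h => ne12 h.symm), if_neg (fun h => ne13 h.symm)]
  norm_num

lemma mem2 (a : ℝ) :
    e2 ∈ (monomial e1 1 + monomial e2 (-1) + monomial e3 (-a) : MvPolynomial (Fin 3) ℝ).support := by
  rw [mem_support_iff, coeff_q, if_neg ne12, if_pos rfl, if_neg (fun h => ne23 h.symm)]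
  norm_num

lemma mem3 (a : ℝ) (ha : a ≠ 0) :
    e3 ∈ (monomial e1 1 + monomial e2 (-1) + monomial e3 (-a) : MvPolynomial (Fin 3) ℝ).support := by
  rw [mem_support_iff, coeff_q, if_neg ne13, if_neg ne23, if_pos rfl]
  simpa using ha

lemma support_sub (a : ℝ) (d : Fin 3 →₀ ℕ)
    (hd : d ∈ (monomial e1 1 + monomial e2 (-1) + monomial e3 (-a) : MvPolynomial (Fin 3) ℝ).support) :
    d = e1 ∨ d = e2 ∨ (d = e3 ∧ a ≠ 0) := by
  rw [mem_support_iff, coeff_q] at hd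
  by_cases k1 : e1 = d
  · exact Or.inl k1.symm
  by_cases k2 : e2 = d
  · exact Or.inr (Or.inl k2.symm)
  by_cases k3 : e3 = d
  · refine Or.inr (Or.inr ⟨k3.symm, ?_⟩)
    simp [k1, k2, k3] at hd
    simpa using hd
  · simp [k1, k2, k3] at hd

lemma lex_le2 : toLex e1 ≤ toLex e2 := by
  refine le_of_lt (Finsupp.Lex.lt_iff.2 ⟨0, ?_, ?_⟩)
  · intro j hj; exact absurd hj (by simp)
  · simp [Finsupp.single_apply]

lemma lex_le3 : toLex e1 ≤ toLex e3 := by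
  refine le_of_lt (Finsupp.Lex.lt_iff.2 ⟨1, ?_, ?_⟩)
  · intro j hj
    have : j = 0 := by omega
    subst this; simp [Finsupp.single_apply]
  · simp [Finsupp.single_apply]

lemma sum_e1 : (e1.sum fun _ e => e) = 2 := by simp
lemma sum_e2 : (e2.sum fun _ e => e) = 2 := by
  rw [Finsupp.sum_add_index (by simp) (by simp)]; simp
lemma sum_e3 : (e3.sum fun _ e => e) = 1 := by simp

end LazardAux

/-- The order of vanishing of `f` at `α`: the least total degree of a nonzero term
in the expansion of `f` about `α`. -/
noncomputable def ordAt {K : Type*} [CommRing K] {n : ℕ}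
    (α : Fin n → K) (f : MvPolynomial (Fin n) K) : ℕ :=
  (((MvPolynomial.bind₁ (fun i => X i + C (α i)) f).support.image
    (fun d => d.sum fun _ e => e)).min).untopD 0

open LazardAux in
/-- For `f(x,y,z) = z² - xy` and `S` the `x`-axis in `ℝ³`: `f` is valuation-invariant
on `S` with valuation `(0,0,2)` at every point, but not order-invariant:
`ord f = 2` at the origin while `ord f = 1` at `(α,0,0)` for `α ≠ 0`. -/
theorem valuationInvariant_not_orderInvariant_example :
    (∀ p : Fin 3 → ℝ, p 1 = 0 → p 2 = 0 →
      lazardVal p ((X 2) ^ 2 - X 0 * X 1 : MvPolynomial (Fin 3) ℝ) =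
        toLex (Finsupp.single 2 2)) ∧
    ordAt (fun _ => 0) ((X 2) ^ 2 - X 0 * X 1 : MvPolynomial (Fin 3) ℝ) = 2 ∧
    (∀ α : ℝ, α ≠ 0 →
      ordAt ![α, 0, 0] ((X 2) ^ 2 - X 0 * X 1 : MvPolynomial (Fin 3) ℝ) = 1) := by
  refine ⟨?_, ?_, ?_⟩
  · intro p h1 h2
    unfold lazardVal
    rw [expand_eq p h1 h2]
    have hmin : (((monomial e1 1 + monomial e2 (-1) + monomial e3 (-(p 0)) :
        MvPolynomial (Fin 3) ℝ).support.image toLex).min) = ((toLex e1 : Lex (Fin 3 →₀ ℕ)) : WithTop (Lex (Fin 3 →₀ ℕ))) := by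
      apply le_antisymm
      · exact Finset.min_le (Finset.mem_image_of_mem _ (mem1 _))
      · apply Finset.le_min
        intro b hb
        obtain ⟨d, hd, rfl⟩ := Finset.mem_image.1 hb
        rcases support_sub _ d hd with rfl | rfl | ⟨rfl, _⟩
        · exact le_refl _
        · exact_mod_cast lex_le2
        · exact_mod_cast lex_le3
    rw [hmin]
    rfl
  · unfold ordAt
    rw [expand_eq (fun _ => 0) rfl rfl]
    have hmin : (((monomial e1 1 + monomial e2 (-1) + monomial e3 (-(0:ℝ)) :
        MvPolynomial (Fin 3) ℝ).support.image (fun d => d.sum fun _ e => e)).min)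
        = (2 : WithTop ℕ) := by
      apply le_antisymm
      · simpa [sum_e1] using Finset.min_le (Finset.mem_image_of_mem (fun d => d.sum fun _ e => e) (mem1 0))
      · apply Finset.le_min
        intro b hb
        obtain ⟨d, hd, rfl⟩ := Finset.mem_image.1 hb
        rcases support_sub _ d hd with rfl | rfl | ⟨rfl, h0⟩
        · simp [sum_e1]
        · simp [sum_e2]
        · exact absurd rfl h0
    rw [hmin]
    rfl
  · intro α hα
    unfold ordAt
    rw [expand_eq ![α, 0, 0] rfl rfl]
    have hmin : (((monomial e1 1 + monomial e2 (-1) + monomial e3 (-(![α,0,0] 0)) :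
        MvPolynomial (Fin 3) ℝ).support.image (fun d => d.sum fun _ e => e)).min)
        = (1 : WithTop ℕ) := by
      have hα' : ![α,0,0] 0 = α := rfl
      rw [hα']
      apply le_antisymm
      · simpa [sum_e3] using Finset.min_le (Finset.mem_image_of_mem (fun d => d.sum fun _ e => e) (mem3 α hα))
      · apply Finset.le_min
        intro b hb
        obtain ⟨d, hd, rfl⟩ := Finset.mem_image.1 hb
        rcases support_sub _ d hd with rfl | rfl | ⟨rfl, h0⟩
        · simp [sum_e1]
        · simp [sum_e2]
        · simp [sum_e3]
    rw [hmin]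
    rfl
end

section
/- Let g ∈ ℝ[x₁,…,xₙ] be nonzero, p ∈ ℝⁿ, and let V ⊂ ℕⁿ be a set containing v_p(g) with evaluator c = (c₁,…,cₙ). Then the one-variable function s ↦ g(p + (s^{c₁},…,s^{cₙ})) is not identically zero, and its order of vanishing at s = 0 equals ⟨c, v_p(g)⟩ = Σᵢ cᵢ·(v_p(g))ᵢ. -/
open MvPolynomial

/-- `c` is an evaluator for `V ⊆ ℕⁿ`. -/
def IsEvaluator {n : ℕ} (V : Set (Fin n → ℕ)) (c : Fin n → ℕ) : Prop :=
  (∀ i, 0 < c i) ∧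
  ∀ i : Fin n, (i : ℕ) + 1 < n → ∀ v ∈ V,
    1 + ∑ j ∈ Finset.univ.filter (fun j => i < j), c j * v j ≤ c i

/-- The one-variable polynomial `s ↦ g(p + (s^{c₁},…,s^{cₙ}))`. -/
noncomputable def testCurvePoly {n : ℕ} (g : MvPolynomial (Fin n) ℝ) (p : Fin n → ℝ)
    (c : Fin n → ℕ) : Polynomial ℝ :=
  MvPolynomial.aeval (fun i => Polynomial.C (p i) + Polynomial.X ^ c i) g

theorem evalTestCurve {n : ℕ} (g : MvPolynomial (Fin n) ℝ) (p : Fin n → ℝ) (c : Fin n → ℕ)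
    (s : ℝ) : Polynomial.eval s (testCurvePoly g p c) =
      MvPolynomial.eval (fun i => p i + s ^ c i) g := by
  simp only [testCurvePoly]
  induction g using MvPolynomial.induction_on with
  | C a => simp
  | add f g hf hg => simp [hf, hg]
  | mul_X f i hf => simp [hf]

/-- Let `g ∈ ℝ[x₁,…,xₙ]` be nonzero, `p ∈ ℝⁿ`, `V ⊆ ℕⁿ` containing `v_p(g)`, and `c`
an evaluator for `V`. Then `s ↦ g(p + (s^{c₁},…,s^{cₙ}))` is not identically zero and
its order of vanishing at `s = 0` equals `⟨c, v_p(g)⟩ = Σᵢ cᵢ·(v_p(g))ᵢ`. -/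
theorem order_along_test_curve {n : ℕ} (g : MvPolynomial (Fin n) ℝ) (hg : g ≠ 0)
    (p : Fin n → ℝ) (V : Set (Fin n → ℕ)) (c : Fin n → ℕ)
    (hV : (fun i => ofLex (lazardVal p g) i) ∈ V) (hc : IsEvaluator V c) :
    (∀ s : ℝ, Polynomial.eval s (testCurvePoly g p c) =
      MvPolynomial.eval (fun i => p i + s ^ c i) g) ∧
    testCurvePoly g p c ≠ 0 ∧
    Polynomial.rootMultiplicity 0 (testCurvePoly g p c) =
      ∑ i, c i * ofLex (lazardVal p g) i := by
  classical
  have part1 : ∀ s : ℝ, Polynomial.eval s (testCurvePoly g p c) =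
      MvPolynomial.eval (fun i => p i + s ^ c i) g :=
    fun s => evalTestCurve g p c s
  set h : MvPolynomial (Fin n) ℝ := MvPolynomial.bind₁ (fun i => X i + C (p i)) g with hh
  have hh0 : h ≠ 0 := by
    intro h0
    apply hg
    have key : MvPolynomial.bind₁ (fun i => X i - C (p i)) h = g := by
      rw [hh, MvPolynomial.bind₁_bind₁]
      simp [MvPolynomial.bind₁_X_left]
    rw [h0, map_zero] at key
    exact key.symm
  have hSne : (h.support.image toLex).Nonempty :=
    (MvPolynomial.support_nonempty.mpr hh0).image _
  have hlaz : lazardVal p g = (h.support.image toLex).min' hSne := by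
    rw [lazardVal, ← Finset.coe_min' hSne]
    rfl
  set v : Fin n →₀ ℕ := ofLex (lazardVal p g) with hv
  have hvmem : v ∈ h.support := by
    have : (h.support.image toLex).min' hSne ∈ h.support.image toLex :=
      Finset.min'_mem _ _
    rw [← hlaz] at this
    obtain ⟨d, hd, hdd⟩ := Finset.mem_image.mp this
    have : d = v := by
      rw [hv, ← hdd]; rfl
    rwa [← this]
  have hmin : ∀ d ∈ h.support, toLex v ≤ toLex d := by
    intro d hd
    have : (h.support.image toLex).min' hSne ≤ toLex d :=
      Finset.min'_le _ _ (Finset.mem_image_of_mem _ hd)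
    rw [← hlaz] at this
    exact this
  -- key inequality
  have key : ∀ d ∈ h.support, d ≠ v → (∑ i, c i * v i) < ∑ i, c i * d i := by
    intro d hd hdv
    have hlt : toLex v < toLex d :=
      lt_of_le_of_ne (hmin d hd) (fun hEq => hdv (by
        have := congrArg ofLex hEq; simpa using this.symm))
    obtain ⟨i, hpre, hi⟩ : ∃ i, (∀ j, j < i → v j = d j) ∧ v i < d i := hlt
    have hsplit : ∀ u : Fin n → ℕ, ∑ j, c j * u j =
        (∑ j ∈ Finset.univ.filter (fun j => j < i), c j * u j) + c i * u i +
        ∑ j ∈ Finset.univ.filter (fun j => i < j), c j * u j := by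
      intro u
      have e1 := Finset.sum_filter_add_sum_filter_not Finset.univ (fun j => j < i)
        (fun j => c j * u j)
      have e2 : ∑ j ∈ Finset.univ.filter (fun j => ¬ j < i), c j * u j =
          c i * u i + ∑ j ∈ Finset.univ.filter (fun j => i < j), c j * u j := by
        have hins : Finset.univ.filter (fun j => ¬ j < i) =
            insert i (Finset.univ.filter (fun j => i < j)) := by
          ext j
          simp only [Finset.mem_filter, Finset.mem_univ, true_and, Finset.mem_insert, not_lt]
          constructor
          · intro hij
            rcases eq_or_lt_of_le hij with h1 | h1
            · exact Or.inl h1.symm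
            · exact Or.inr h1
          · rintro (rfl | h1)
            · exact le_refl _
            · exact le_of_lt h1
        rw [hins, Finset.sum_insert (by simp)]
      omega
    have hTv : 1 + ∑ j ∈ Finset.univ.filter (fun j => i < j), c j * v j ≤ c i := by
      by_cases hin : (i : ℕ) + 1 < n
      · exact hc.2 i hin _ hV
      · have hfe : Finset.univ.filter (fun j => i < j) = (∅ : Finset (Fin n)) := by
          ext j
          simp only [Finset.mem_filter, Finset.mem_univ, true_and, Finset.notMem_empty,
            iff_false]
          intro hij
          have : (i : ℕ) < (j : ℕ) := hij
          have : (j : ℕ) < n := j.isLt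
          omega
        rw [hfe]
        simp only [Finset.sum_empty, add_zero]; exact hc.1 i
    rw [hsplit (fun j => v j), hsplit (fun j => d j)]
    have hA : (∑ j ∈ Finset.univ.filter (fun j => j < i), c j * v j) =
        ∑ j ∈ Finset.univ.filter (fun j => j < i), c j * d j := by
      apply Finset.sum_congr rfl
      intro j hj
      rw [hpre j (Finset.mem_filter.mp hj).2]
    rw [hA]
    have h1 : c i * v i + (1 + ∑ j ∈ Finset.univ.filter (fun j => i < j), c j * v j)
        ≤ c i * v i + c i := by omega
    have h2 : c i * v i + c i = c i * (v i + 1) := by ring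
    have h3 : c i * (v i + 1) ≤ c i * d i := Nat.mul_le_mul_left _ hi
    omega
  -- rewrite testCurvePoly as a sum
  set w : (Fin n →₀ ℕ) → ℕ := fun d => ∑ i, c i * d i with hw
  have hP : testCurvePoly g p c =
      ∑ d ∈ h.support, Polynomial.C (MvPolynomial.coeff d h) * Polynomial.X ^ w d := by
    have h1 : testCurvePoly g p c = MvPolynomial.aeval (fun i => (Polynomial.X : Polynomial ℝ) ^ c i) h := by
      rw [testCurvePoly, hh, MvPolynomial.aeval_bind₁]
      have he : (fun i => (MvPolynomial.aeval fun i => (Polynomial.X : Polynomial ℝ) ^ c i)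
          (X i + C (p i))) = fun i => Polynomial.C (p i) + Polynomial.X ^ c i := by
        funext i
        simp [add_comm]
      rw [he]
    rw [h1]
    conv_lhs => rw [h.as_sum]
    rw [map_sum]
    apply Finset.sum_congr rfl
    intro d _
    rw [MvPolynomial.aeval_monomial, Polynomial.algebraMap_eq]
    congr 1
    rw [Finsupp.prod_fintype _ _ (fun i => pow_zero _)]
    rw [Finset.prod_congr rfl
      (fun i (_ : i ∈ (Finset.univ : Finset (Fin n))) => (pow_mul Polynomial.X (c i) (d i)).symm)]
    rw [Finset.prod_pow_eq_pow_sum]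
  -- coefficients of testCurvePoly
  have hcoeff : ∀ k, (testCurvePoly g p c).coeff k =
      ∑ d ∈ h.support, if k = w d then MvPolynomial.coeff d h else 0 := by
    intro k
    rw [hP, Polynomial.finset_sum_coeff]
    apply Finset.sum_congr rfl
    intro d _
    rw [Polynomial.coeff_C_mul, Polynomial.coeff_X_pow]
    split <;> simp_all
  have hcv : MvPolynomial.coeff v h ≠ 0 := MvPolynomial.mem_support_iff.mp hvmem
  have hcoeff_wv : (testCurvePoly g p c).coeff (w v) = MvPolynomial.coeff v h := by
    rw [hcoeff]
    rw [Finset.sum_eq_single_of_mem v hvmem]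
    · simp
    · intro d hd hdv
      have := key d hd hdv
      have : w v ≠ w d := Nat.ne_of_lt this
      simp [this]
  have hP0 : testCurvePoly g p c ≠ 0 := by
    intro h0
    apply hcv
    rw [← hcoeff_wv, h0, Polynomial.coeff_zero]
  have hlow : ∀ k < w v, (testCurvePoly g p c).coeff k = 0 := by
    intro k hk
    rw [hcoeff]
    apply Finset.sum_eq_zero
    intro d hd
    have hwd : w v ≤ w d := by
      by_cases hdv : d = v
      · rw [hdv]
      · exact le_of_lt (key d hd hdv)
    have : k ≠ w d := by omega
    simp [this]
  refine ⟨part1, hP0, ?_⟩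
  have hsum : (∑ i, c i * ofLex (lazardVal p g) i) = w v := rfl
  rw [hsum]
  apply le_antisymm
  · rw [Polynomial.rootMultiplicity_le_iff hP0]
    intro hdvd
    apply hcv
    rw [← hcoeff_wv]
    rw [map_zero, sub_zero] at hdvd
    exact Polynomial.X_pow_dvd_iff.mp hdvd (w v) (Nat.lt_succ_self _)
  · rw [Polynomial.le_rootMultiplicity_iff hP0]
    rw [map_zero, sub_zero]
    exact Polynomial.X_pow_dvd_iff.mpr hlow
end
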